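/- Let κ, λ : ℝ → ℝ be continuous functions, fix t₀ ∈ ℝ and C ∈ ℂ, and define θ : ℝ → ℝ by θ t = ∫_{t₀}^{t} κ(τ) dτ and Z : ℝ → ℂ by Z t = (C − i • ∫_{t₀}^{t} λ(τ) • exp(−i θ(τ)) dτ) * exp(i θ(t)). Then Z is differentiable and satisfies for all t: deriv Z t = i * κ t * Z t − i * λ t. (This integrates the system A' = Bκ − λ, B' = −Aκ via Z = B + iA, arising from curves orthogonal to a congruence of affine planes in ℝ³.) -/

import Mathlib

/-- The function `Z t = (C − i ∫_{t₀}^t λ(τ) exp(−i θ(τ)) dτ) * exp(i θ(t))`, with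
`θ t = ∫_{t₀}^t κ`, is differentiable and solves `Z' = iκZ − iλ`. -/
theorem stmt12
    (κ lam : ℝ → ℝ) (hκ : Continuous κ) (hlam : Continuous lam)
    (t₀ : ℝ) (C : ℂ) (θ : ℝ → ℝ) (Z : ℝ → ℂ)
    (hθ : ∀ t : ℝ, θ t = ∫ τ in t₀..t, κ τ)
    (hZ : ∀ t : ℝ, Z t =
      (C - Complex.I * ∫ τ in t₀..t, (lam τ : ℂ) * Complex.exp (-Complex.I * (θ τ : ℂ)))
        * Complex.exp (Complex.I * (θ t : ℂ))) :
    Differentiable ℝ Z ∧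
      ∀ t : ℝ, deriv Z t = Complex.I * (κ t : ℂ) * Z t - Complex.I * (lam t : ℂ) := by
  have hθd : ∀ t, HasDerivAt θ (κ t) t := by
    intro t
    rw [funext hθ]
    exact intervalIntegral.integral_hasDerivAt_right (hκ.intervalIntegrable t₀ t)
      (hκ.stronglyMeasurableAtFilter _ _) hκ.continuousAt
  have hθc : Continuous θ := by
    rw [continuous_iff_continuousAt]; exact fun t => (hθd t).continuousAt
  set g : ℝ → ℂ := fun τ => (lam τ : ℂ) * Complex.exp (-Complex.I * (θ τ : ℂ)) with hg
  have hgc : Continuous g :=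
    (Complex.continuous_ofReal.comp hlam).mul
      (Complex.continuous_exp.comp (continuous_const.mul
        (Complex.continuous_ofReal.comp hθc)))
  set F : ℝ → ℂ := fun t => ∫ τ in t₀..t, g τ with hF
  have hFd : ∀ t, HasDerivAt F (g t) t := fun t =>
    intervalIntegral.integral_hasDerivAt_right (hgc.intervalIntegrable t₀ t)
      (hgc.stronglyMeasurableAtFilter _ _) hgc.continuousAt
  have hExp : ∀ t, HasDerivAt (fun t => Complex.exp (Complex.I * (θ t : ℂ)))
      (Complex.exp (Complex.I * (θ t : ℂ)) * (Complex.I * (κ t : ℂ))) t := fun t =>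
    (((hθd t).ofReal_comp).const_mul Complex.I).cexp
  have hZd : ∀ t, HasDerivAt Z
      (Complex.I * (κ t : ℂ) * Z t - Complex.I * (lam t : ℂ)) t := by
    intro t
    have h := ((hasDerivAt_const t C).sub ((hFd t).const_mul Complex.I)).mul (hExp t)
    have hZfun : Z = fun t => (C - Complex.I * F t) * Complex.exp (Complex.I * (θ t : ℂ)) :=
      funext hZ
    rw [hZfun]
    convert h using 1
    · rfl
    · rfl
    have hee : Complex.exp (-Complex.I * (θ t : ℂ)) * Complex.exp (Complex.I * (θ t : ℂ)) = 1 := by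
      rw [neg_mul, Complex.exp_neg, inv_mul_cancel₀ (Complex.exp_ne_zero _)]
    simp only [hg, Pi.sub_apply]
    linear_combination (Complex.I * (lam t : ℂ)) * hee
  exact ⟨fun t => (hZd t).differentiableAt, fun t => (hZd t).deriv⟩
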